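/- Let μ0 and μ1 be probability densities on a measurable space X with respect to a dominating measure λ, with μ1(x) ≤ C·μ0(x) for some constant C > 0. Let (X_1, U_1), (X_2, U_2), ... be i.i.d. pairs with X_n ~ μ0 and U_n ~ Uniform[0,1] independent, and let X* ~ μ1 be independent of this sequence. Define K* as the first index n such that U_n ≤ μ1(X_n)/(C·μ0(X_n)), and let K be any stopping time with respect to the natural filtration of the sequence ((X_n, U_n)). Define Z = X_{K*} if K* ≤ K and Z = X* otherwise. Then Z is distributed according to μ1. -/

import Mathlib

open MeasureTheory ProbabilityTheory Classical

/-- Validity of hybrid rejection sampling.  Let `μ0, μ1` be probability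
densities w.r.t. a dominating measure `lam` with `μ1 ≤ C·μ0`.  Let
`(X_n, U_n)`, `n = 1, 2, ...` be i.i.d. with `X_n ~ μ0` and `U_n ~ Unif[0,1]`
independent, and let `X* ~ μ1` be independent of the sequence.  Let `K*` be
the first index `n ≥ 1` with `U_n ≤ μ1(X_n)/(C·μ0(X_n))`, and let `K` be any
stopping time w.r.t. the natural filtration of `((X_n, U_n))_{n≥1}`.  Then
`Z := X_{K*}` if `K* ≤ K` (with `K*` finite), else `Z := X*`, is distributed
according to `μ1`. -/
theorem stmt_0 {Ω 𝒳 : Type*} [MeasurableSpace Ω] [MeasurableSpace 𝒳]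
    (P : Measure Ω) [IsProbabilityMeasure P]
    (lam : Measure 𝒳) [SigmaFinite lam]
    (μ0 μ1 : 𝒳 → ℝ) (hμ0meas : Measurable μ0) (hμ1meas : Measurable μ1)
    (hμ0nn : ∀ x, 0 ≤ μ0 x) (hμ1nn : ∀ x, 0 ≤ μ1 x)
    (hμ0prob : IsProbabilityMeasure
      (lam.withDensity fun x => ENNReal.ofReal (μ0 x)))
    (hμ1prob : IsProbabilityMeasure
      (lam.withDensity fun x => ENNReal.ofReal (μ1 x)))
    (C : ℝ) (hC : 0 < C) (hdom : ∀ x, μ1 x ≤ C * μ0 x)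
    (X : ℕ → Ω → 𝒳) (U : ℕ → Ω → ℝ) (Xstar : Ω → 𝒳)
    (hXmeas : ∀ n, Measurable (X n)) (hUmeas : ∀ n, Measurable (U n))
    (hXstarmeas : Measurable Xstar)
    -- the pairs `(X_n, U_n)` are i.i.d. with law `μ0 ⊗ Unif[0,1]`
    (hiid : iIndepFun (fun n ω => (X n ω, U n ω)) P)
    (hlaw : ∀ n, Measure.map (fun ω => (X n ω, U n ω)) P =
      (lam.withDensity fun x => ENNReal.ofReal (μ0 x)).prod
        (volume.restrict (Set.Icc (0:ℝ) 1)))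
    -- `X*` is distributed according to `μ1` and independent of the sequence
    (hlawstar : Measure.map Xstar P =
      lam.withDensity fun x => ENNReal.ofReal (μ1 x))
    (hindepstar : IndepFun Xstar (fun ω => fun n : ℕ => (X n ω, U n ω)) P)
    -- `K` is a stopping time for the natural filtration of the sequence
    (K : Ω → ℕ)
    (hstop : ∀ n : ℕ, MeasurableSet[⨆ i ∈ Finset.Icc 1 n,
        MeasurableSpace.comap (fun ω => (X i ω, U i ω)) inferInstance]
      {ω | K ω ≤ n})
    -- `K*` is the first accepted index
    (Kstar : Ω → ℕ)
    (hKstar : ∀ ω, Kstar ω =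
      sInf {n : ℕ | 1 ≤ n ∧ U n ω ≤ μ1 (X n ω) / (C * μ0 (X n ω))})
    (Z : Ω → 𝒳)
    (hZ : ∀ ω, Z ω =
      if 1 ≤ Kstar ω ∧ Kstar ω ≤ K ω then X (Kstar ω) ω else Xstar ω) :
    Measure.map Z P = lam.withDensity fun x => ENNReal.ofReal (μ1 x) := by
  classical
  set ν1 : Measure 𝒳 := lam.withDensity (fun x => ENNReal.ofReal (μ1 x)) with hν1def
  set ν0 : Measure 𝒳 := lam.withDensity (fun x => ENNReal.ofReal (μ0 x)) with hν0def
  set r : 𝒳 → ℝ := fun x => μ1 x / (C * μ0 x) with hrdef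
  have hrmeas : Measurable r := hμ1meas.div (measurable_const.mul hμ0meas)
  have hr01 : ∀ x, 0 ≤ r x ∧ r x ≤ 1 := by
    intro x
    by_cases h0 : μ0 x = 0
    · have h1 : μ1 x = 0 := le_antisymm (by simpa [h0] using hdom x) (hμ1nn x)
      simp [hrdef, h0, h1]
    · have hpos : 0 < μ0 x := lt_of_le_of_ne (hμ0nn x) (Ne.symm h0)
      refine ⟨div_nonneg (hμ1nn x) (le_of_lt (mul_pos hC hpos)), ?_⟩
      rw [hrdef]
      simp only
      rw [div_le_one (mul_pos hC hpos)]
      exact hdom x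
  have hrmul : ∀ x, μ0 x * r x = C⁻¹ * μ1 x := by
    intro x
    by_cases h0 : μ0 x = 0
    · have h1 : μ1 x = 0 := le_antisymm (by simpa [h0] using hdom x) (hμ1nn x)
      simp [hrdef, h0, h1]
    · rw [hrdef]
      field_simp
  set pr : ℕ → Ω → 𝒳 × ℝ := fun n ω => (X n ω, U n ω) with hprdef
  have hprmeas : ∀ n, Measurable (pr n) := fun n => (hXmeas n).prodMk (hUmeas n)
  set a : ℕ → Set Ω := fun n => {ω | U n ω ≤ r (X n ω)} with hadef
  have hameas : ∀ n, MeasurableSet (a n) :=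
    fun n => measurableSet_le (hUmeas n) (hrmeas.comp (hXmeas n))
  have hKstar' : ∀ ω, Kstar ω = sInf {n : ℕ | 1 ≤ n ∧ ω ∈ a n} := hKstar
  -- characterization of {Kstar = n} for n ≥ 1
  have hKeq : ∀ n, 1 ≤ n → ∀ ω,
      (Kstar ω = n ↔ ω ∈ a n ∧ ∀ i, 1 ≤ i → i < n → ω ∉ a i) := by
    intro n hn ω
    rw [hKstar' ω]
    constructor
    · intro h
      have hne : {m : ℕ | 1 ≤ m ∧ ω ∈ a m}.Nonempty := by
        by_contra hemp
        rw [Set.not_nonempty_iff_eq_empty] at hemp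
        rw [hemp] at h
        simp [Nat.sInf_empty] at h
        omega
      have hmem := Nat.sInf_mem hne
      rw [h] at hmem
      refine ⟨hmem.2, ?_⟩
      intro i h1i hin hia
      have hmemi : i ∈ {m : ℕ | 1 ≤ m ∧ ω ∈ a m} := ⟨h1i, hia⟩
      have := Nat.sInf_le hmemi
      omega
    · rintro ⟨han, hmin⟩
      have hmem : n ∈ {m : ℕ | 1 ≤ m ∧ ω ∈ a m} := ⟨hn, han⟩
      have hle := Nat.sInf_le hmem
      have hmem' := Nat.sInf_mem ⟨n, hmem⟩
      by_contra hne
      have hlt : sInf {m : ℕ | 1 ≤ m ∧ ω ∈ a m} < n := by omega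
      exact hmin _ hmem'.1 hlt hmem'.2
  -- events
  set E : ℕ → Set Ω := fun n => {ω | 1 ≤ n ∧ Kstar ω = n ∧ n ≤ K ω} with hEdef
  set B : Set Ω := {ω | ¬ (1 ≤ Kstar ω ∧ Kstar ω ≤ K ω)} with hBdef
  have hBc : Bᶜ = ⋃ n, E n := by
    ext ω
    simp only [hBdef, hEdef, Set.mem_compl_iff, Set.mem_setOf_eq, not_not, Set.mem_iUnion]
    constructor
    · rintro ⟨h1, h2⟩
      exact ⟨Kstar ω, h1, rfl, h2⟩
    · rintro ⟨n, h1, h2, h3⟩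
      exact ⟨h2 ▸ h1, h2 ▸ h3⟩
  -- measurability of K events
  have hKmeasset : ∀ n, MeasurableSet {ω | K ω ≤ n} := by
    intro n
    have hle : (⨆ i ∈ Finset.Icc 1 n,
        MeasurableSpace.comap (fun ω => (X i ω, U i ω)) inferInstance) ≤
        (inferInstance : MeasurableSpace Ω) :=
      iSup₂_le fun i _ => (hprmeas i).comap_le
    exact hle _ (hstop n)
  have hKgemeas : ∀ n, MeasurableSet {ω | n ≤ K ω} := by
    intro n
    cases n with
    | zero => simp
    | succ m =>
      have : {ω | m + 1 ≤ K ω} = {ω | K ω ≤ m}ᶜ := by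
        ext ω; simp only [Set.mem_setOf_eq, Set.mem_compl_iff]; omega
      rw [this]; exact (hKmeasset m).compl
  have hKstarmeasset : ∀ n, 1 ≤ n → MeasurableSet {ω | Kstar ω = n} := by
    intro n hn
    have : {ω | Kstar ω = n} = a n ∩ ⋂ i ∈ Finset.Ico 1 n, (a i)ᶜ := by
      ext ω
      simp only [Set.mem_setOf_eq, hKeq n hn ω, Set.mem_inter_iff, Set.mem_iInter,
        Finset.mem_Ico, Set.mem_compl_iff]
      constructor
      · rintro ⟨h1, h2⟩
        exact ⟨h1, fun i hi => h2 i hi.1 hi.2⟩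
      · rintro ⟨h1, h2⟩
        exact ⟨h1, fun i h1i hin => h2 i ⟨h1i, hin⟩⟩
    rw [this]
    exact (hameas n).inter (MeasurableSet.biInter (Finset.Ico 1 n).countable_toSet
      fun i _ => (hameas i).compl)
  have hEmeas : ∀ n, MeasurableSet (E n) := by
    intro n
    by_cases hn : 1 ≤ n
    · have : E n = {ω | Kstar ω = n} ∩ {ω | n ≤ K ω} := by
        ext ω; simp [hEdef, hn, and_assoc]
      rw [this]
      exact (hKstarmeasset n hn).inter (hKgemeas n)
    · have : E n = ∅ := by
        ext ω; simp [hEdef, hn]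
      rw [this]; exact MeasurableSet.empty
  have hBmeas : MeasurableSet B := by
    have : B = (⋃ n, E n)ᶜ := by rw [← hBc, compl_compl]
    rw [this]
    exact (MeasurableSet.iUnion hEmeas).compl
  -- decomposition of Z preimage
  have hZdecomp : ∀ t : Set 𝒳,
      Z ⁻¹' t = (⋃ n, E n ∩ X n ⁻¹' t) ∪ (B ∩ Xstar ⁻¹' t) := by
    intro t
    ext ω
    simp only [Set.mem_preimage, Set.mem_union, Set.mem_iUnion, Set.mem_inter_iff,
      hEdef, hBdef, Set.mem_setOf_eq]
    rw [hZ ω]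
    by_cases hcond : 1 ≤ Kstar ω ∧ Kstar ω ≤ K ω
    · rw [if_pos hcond]
      constructor
      · intro h
        exact Or.inl ⟨Kstar ω, ⟨hcond.1, rfl, hcond.2⟩, h⟩
      · rintro (⟨n, ⟨h1, h2, h3⟩, h4⟩ | ⟨h1, _⟩)
        · rwa [h2]
        · exact absurd hcond h1
    · rw [if_neg hcond]
      constructor
      · intro h
        exact Or.inr ⟨hcond, h⟩
      · rintro (⟨n, ⟨h1, h2, h3⟩, h4⟩ | ⟨h1, h2⟩)
        · exact absurd ⟨h2 ▸ h1, h2 ▸ h3⟩ hcond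
        · exact h2
  have hZmeas : Measurable Z := by
    intro t ht
    rw [hZdecomp t]
    exact (MeasurableSet.iUnion fun n => (hEmeas n).inter ((hXmeas n) ht)).union
      (hBmeas.inter (hXstarmeas ht))
  -- probability of acceptance event
  have hTmeas : ∀ t : Set 𝒳, MeasurableSet t →
      MeasurableSet {p : 𝒳 × ℝ | p.1 ∈ t ∧ p.2 ≤ r p.1} := fun t ht =>
    (ht.preimage measurable_fst).inter
      (measurableSet_le measurable_snd (hrmeas.comp measurable_fst))
  have hprT : ∀ n t, pr n ⁻¹' {p : 𝒳 × ℝ | p.1 ∈ t ∧ p.2 ≤ r p.1} = a n ∩ X n ⁻¹' t := by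
    intro n t
    ext ω
    simp only [Set.mem_preimage, Set.mem_setOf_eq, Set.mem_inter_iff, hadef, hprdef]
    tauto
  have hacc : ∀ n t, MeasurableSet t →
      P (a n ∩ X n ⁻¹' t) = ENNReal.ofReal C⁻¹ * ν1 t := by
    intro n t ht
    have hlawn : Measure.map (pr n) P = ν0.prod (volume.restrict (Set.Icc (0:ℝ) 1)) := hlaw n
    rw [← hprT n t, ← Measure.map_apply (hprmeas n) (hTmeas t ht), hlawn,
      Measure.prod_apply (hTmeas t ht)]
    have hslice : ∀ x, (volume.restrict (Set.Icc (0:ℝ) 1))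
        (Prod.mk x ⁻¹' {p : 𝒳 × ℝ | p.1 ∈ t ∧ p.2 ≤ r p.1})
        = t.indicator (fun x => ENNReal.ofReal (r x)) x := by
      intro x
      by_cases hx : x ∈ t
      · have h1 : Prod.mk x ⁻¹' {p : 𝒳 × ℝ | p.1 ∈ t ∧ p.2 ≤ r p.1} = Set.Iic (r x) := by
          ext u; simp [hx]
        rw [h1, Set.indicator_of_mem hx, Measure.restrict_apply measurableSet_Iic]
        have h2 : Set.Iic (r x) ∩ Set.Icc (0:ℝ) 1 = Set.Icc 0 (r x) := by
          ext u
          simp only [Set.mem_inter_iff, Set.mem_Iic, Set.mem_Icc]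
          constructor
          · rintro ⟨h1, h2, h3⟩; exact ⟨h2, h1⟩
          · rintro ⟨h1, h2⟩; exact ⟨h2, h1, h2.trans (hr01 x).2⟩
        rw [h2, Real.volume_Icc, sub_zero]
      · have h1 : Prod.mk x ⁻¹' {p : 𝒳 × ℝ | p.1 ∈ t ∧ p.2 ≤ r p.1} = ∅ := by
          ext u; simp [hx]
        rw [h1, Set.indicator_of_notMem hx]; simp
    rw [lintegral_congr hslice, lintegral_indicator ht, hν0def,
      restrict_withDensity ht,
      lintegral_withDensity_eq_lintegral_mul _ (hμ0meas.ennreal_ofReal)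
        (hrmeas.ennreal_ofReal)]
    have hpt : ∀ x, ((fun x => ENNReal.ofReal (μ0 x)) * fun x => ENNReal.ofReal (r x)) x
        = ENNReal.ofReal C⁻¹ * ENNReal.ofReal (μ1 x) := by
      intro x
      simp only [Pi.mul_apply]
      rw [← ENNReal.ofReal_mul (hμ0nn x), hrmul x,
        ENNReal.ofReal_mul (by positivity : (0:ℝ) ≤ C⁻¹)]
    rw [lintegral_congr hpt, lintegral_const_mul _ hμ1meas.ennreal_ofReal,
      hν1def, withDensity_apply _ ht]
  -- independence step
  have hEcalc : ∀ n, 1 ≤ n → ∀ t, MeasurableSet t →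
      P (E n ∩ X n ⁻¹' t) =
        P ((⋂ i ∈ Finset.Ico 1 n, (a i)ᶜ) ∩ {ω | n ≤ K ω}) *
          (ENNReal.ofReal C⁻¹ * ν1 t) := by
    intro n hn t ht
    have hED : E n ∩ X n ⁻¹' t =
        ((⋂ i ∈ Finset.Ico 1 n, (a i)ᶜ) ∩ {ω | n ≤ K ω}) ∩ (a n ∩ X n ⁻¹' t) := by
      ext ω
      simp only [hEdef, Set.mem_inter_iff, Set.mem_setOf_eq, Set.mem_iInter,
        Finset.mem_Ico, Set.mem_compl_iff, Set.mem_preimage, hKeq n hn ω]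
      constructor
      · rintro ⟨⟨_, ⟨han, hmin⟩, hK⟩, hX⟩
        exact ⟨⟨fun i hi => hmin i hi.1 hi.2, hK⟩, ⟨han, hX⟩⟩
      · rintro ⟨⟨hmin, hK⟩, han, hX⟩
        exact ⟨⟨hn, ⟨han, fun i h1 h2 => hmin i ⟨h1, h2⟩⟩, hK⟩, hX⟩
    have hiid' : iIndep (fun i => MeasurableSpace.comap (pr i) inferInstance) P := hiid
    have hindepn : Indep
        (⨆ i ∈ Finset.Icc 1 (n-1), MeasurableSpace.comap (pr i) inferInstance)
        (MeasurableSpace.comap (pr n) inferInstance) P := by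
      have hd : Disjoint {i : ℕ | i ∈ Finset.Icc 1 (n-1)} ({n} : Set ℕ) := by
        rw [Set.disjoint_singleton_right]
        simp only [Set.mem_setOf_eq, Finset.mem_Icc]
        omega
      have h := indep_iSup_of_disjoint
        (m := fun i => MeasurableSpace.comap (pr i) inferInstance)
        (fun i => (hprmeas i).comap_le) hiid' hd
      rwa [iSup_singleton] at h
    have hDmeas : MeasurableSet[⨆ i ∈ Finset.Icc 1 (n-1),
        MeasurableSpace.comap (pr i) inferInstance]
        ((⋂ i ∈ Finset.Ico 1 n, (a i)ᶜ) ∩ {ω | n ≤ K ω}) := by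
      apply MeasurableSet.inter
      · apply MeasurableSet.biInter (Finset.Ico 1 n).countable_toSet
        intro i hi
        apply MeasurableSet.compl
        have hmem : i ∈ Finset.Icc 1 (n-1) := by
          simp only [Finset.mem_coe, Finset.mem_Ico] at hi
          simp only [Finset.mem_Icc]
          omega
        have hle : MeasurableSpace.comap (pr i) inferInstance ≤
            ⨆ i ∈ Finset.Icc 1 (n-1), MeasurableSpace.comap (pr i) inferInstance :=
          le_iSup₂ (f := fun i _ => MeasurableSpace.comap (pr i)
            (inferInstance : MeasurableSpace (𝒳 × ℝ))) i hmem
        refine hle _ ?_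
        exact ⟨{p : 𝒳 × ℝ | p.2 ≤ r p.1},
          measurableSet_le measurable_snd (hrmeas.comp measurable_fst), rfl⟩
      · have heq : {ω | n ≤ K ω} = {ω | K ω ≤ n - 1}ᶜ := by
          ext ω; simp only [Set.mem_setOf_eq, Set.mem_compl_iff]; omega
        rw [heq]
        exact MeasurableSet.compl (hstop (n-1))
    have hanmeas : MeasurableSet[MeasurableSpace.comap (pr n) inferInstance]
        (a n ∩ X n ⁻¹' t) :=
      ⟨{p : 𝒳 × ℝ | p.1 ∈ t ∧ p.2 ≤ r p.1}, hTmeas t ht, hprT n t⟩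
    rw [hED, (Indep_iff _ _ _).1 hindepn _ _ hDmeas hanmeas, hacc n t ht]
  have hmain : ∀ n t, MeasurableSet t →
      P (E n ∩ X n ⁻¹' t) = P (E n) * ν1 t := by
    intro n t ht
    by_cases hn : 1 ≤ n
    · have h1 := hEcalc n hn t ht
      have h2 := hEcalc n hn Set.univ MeasurableSet.univ
      have hν1univ : ν1 Set.univ = 1 := measure_univ
      have hEn : E n = E n ∩ X n ⁻¹' Set.univ := by simp
      rw [h1, hEn, h2, hν1univ, mul_one, mul_assoc]
    · have : E n = ∅ := by ext ω; simp [hEdef, hn]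
      simp [this]
  -- fallback step
  have hfall : ∀ t, MeasurableSet t →
      P (B ∩ Xstar ⁻¹' t) = P B * ν1 t := by
    intro t ht
    set seq : Ω → ℕ → 𝒳 × ℝ := fun ω n => (X n ω, U n ω) with hseqdef
    have hseqmeas : Measurable seq := measurable_pi_lambda _ fun n => hprmeas n
    set M : MeasurableSpace Ω := MeasurableSpace.comap seq inferInstance with hMdef
    have haM : ∀ n, MeasurableSet[M] (a n) := fun n =>
      ⟨{f : ℕ → 𝒳 × ℝ | (f n).2 ≤ r (f n).1},
        measurableSet_le (measurable_snd.comp (measurable_pi_apply n))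
          (hrmeas.comp (measurable_fst.comp (measurable_pi_apply n))), rfl⟩
    have hKM : ∀ m, MeasurableSet[M] {ω | K ω ≤ m} := by
      intro m
      have hle : (⨆ i ∈ Finset.Icc 1 m,
          MeasurableSpace.comap (pr i) inferInstance) ≤ M := by
        refine iSup₂_le fun i _ => ?_
        have h1 : (MeasurableSpace.comap (pr i) inferInstance : MeasurableSpace Ω)
            = MeasurableSpace.comap seq
              (MeasurableSpace.comap (fun f : ℕ → 𝒳 × ℝ => f i) inferInstance) := by
          rw [MeasurableSpace.comap_comp]
          rfl
        rw [h1, hMdef]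
        exact MeasurableSpace.comap_mono (measurable_pi_apply i).comap_le
      exact hle _ (hstop m)
    have hKgeM : ∀ m, MeasurableSet[M] {ω | m ≤ K ω} := by
      intro m
      cases m with
      | zero => simp
      | succ k =>
        have heq : {ω | k + 1 ≤ K ω} = {ω | K ω ≤ k}ᶜ := by
          ext ω; simp only [Set.mem_setOf_eq, Set.mem_compl_iff]; omega
        rw [heq]; exact (hKM k).compl
    have hKsM : ∀ n, 1 ≤ n → MeasurableSet[M] {ω | Kstar ω = n} := by
      intro n hn
      have heq : {ω | Kstar ω = n} = a n ∩ ⋂ i ∈ Finset.Ico 1 n, (a i)ᶜ := by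
        ext ω
        simp only [Set.mem_setOf_eq, hKeq n hn ω, Set.mem_inter_iff, Set.mem_iInter,
          Finset.mem_Ico, Set.mem_compl_iff]
        constructor
        · rintro ⟨h1, h2⟩
          exact ⟨h1, fun i hi => h2 i hi.1 hi.2⟩
        · rintro ⟨h1, h2⟩
          exact ⟨h1, fun i h1i hin => h2 i ⟨h1i, hin⟩⟩
      rw [heq]
      exact (haM n).inter (MeasurableSet.biInter (Finset.Ico 1 n).countable_toSet
        fun i _ => (haM i).compl)
    have hEM : ∀ n, MeasurableSet[M] (E n) := by
      intro n
      by_cases hn : 1 ≤ n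
      · have heq : E n = {ω | Kstar ω = n} ∩ {ω | n ≤ K ω} := by
          ext ω; simp [hEdef, hn, and_assoc]
        rw [heq]
        exact (hKsM n hn).inter (hKgeM n)
      · have heq : E n = ∅ := by ext ω; simp [hEdef, hn]
        rw [heq]; exact @MeasurableSet.empty _ M
    have hBM : MeasurableSet[M] B := by
      have heq : B = (⋃ n, E n)ᶜ := by rw [← hBc, compl_compl]
      rw [heq]
      exact (MeasurableSet.iUnion hEM).compl
    obtain ⟨T, hT, hTeq⟩ := hBM
    have hmul := hindepstar.measure_inter_preimage_eq_mul t T ht hT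
    have hXstart : P (Xstar ⁻¹' t) = ν1 t := by
      rw [← Measure.map_apply hXstarmeas ht, hlawstar]
    rw [← hTeq, Set.inter_comm, hmul, hXstart, mul_comm]
  -- assembly
  refine Measure.ext fun t ht => ?_
  rw [Measure.map_apply hZmeas ht, hZdecomp t]
  have hdisjU : Pairwise (Function.onFun Disjoint fun n => E n ∩ X n ⁻¹' t) := by
    intro m n hmn
    rw [Function.onFun, Set.disjoint_left]
    rintro ω ⟨⟨_, hm, _⟩, _⟩ ⟨⟨_, hn, _⟩, _⟩
    exact hmn (hm ▸ hn ▸ rfl)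
  have hdisjE : Pairwise (Function.onFun Disjoint E) := by
    intro m n hmn
    rw [Function.onFun, Set.disjoint_left]
    rintro ω ⟨_, hm, _⟩ ⟨_, hn, _⟩
    exact hmn (hm ▸ hn ▸ rfl)
  have hdisj : Disjoint (⋃ n, E n ∩ X n ⁻¹' t) (B ∩ Xstar ⁻¹' t) := by
    refine Set.disjoint_left.2 ?_
    rintro ω hω ⟨hB, _⟩
    rw [Set.mem_iUnion] at hω
    obtain ⟨n, ⟨h1, h2, h3⟩, _⟩ := hω
    exact hB ⟨h2 ▸ h1, h2 ▸ h3⟩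
  rw [measure_union hdisj (hBmeas.inter (hXstarmeas ht)),
    measure_iUnion hdisjU fun n => (hEmeas n).inter ((hXmeas n) ht)]
  have hsum : (∑' n, P (E n ∩ X n ⁻¹' t)) = P Bᶜ * ν1 t := by
    have : ∀ n, P (E n ∩ X n ⁻¹' t) = P (E n) * ν1 t := fun n => hmain n t ht
    rw [tsum_congr this, ENNReal.tsum_mul_right, ← measure_iUnion hdisjE hEmeas, ← hBc]
  rw [hsum, hfall t ht, ← add_mul]
  have hone : P Bᶜ + P B = 1 := by
    have h := measure_add_measure_compl (μ := P) hBmeas.compl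
    rwa [compl_compl, measure_univ] at h
  rw [hone, one_mul]
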